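/- Let ℓ ∈ ℕ₀. Then for every y ∈ ℝ one has ∫_ℝ |x|^ℓ e^{-|x|} e^{-|y-x|} dx = (e^{-|y|}/(ℓ+1)) · ( |y|^{ℓ+1} + Σ_{j=0}^{ℓ-1} ((ℓ+1)!/(ℓ-j)!) · |y|^{ℓ-j} / 2^{1+j} + (ℓ+1)!/2^ℓ ). -/

import Mathlib

open MeasureTheory Finset Set Filter

namespace Stmt4Aux

lemma tends_zero (m : ℕ) :
    Tendsto (fun x : ℝ => x ^ m * Real.exp (-(2 * x))) atTop (nhds 0) := by
  have h := (Real.tendsto_pow_mul_exp_neg_atTop_nhds_zero m).mul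
    Real.tendsto_exp_neg_atTop_nhds_zero
  rw [mul_zero] at h
  refine h.congr fun x => ?_
  rw [mul_assoc, ← Real.exp_add]
  congr 2
  ring

lemma intOn (m : ℕ) (y : ℝ) :
    IntegrableOn (fun x : ℝ => x ^ m * Real.exp (-(2 * x))) (Ioi y) := by
  apply integrable_of_isBigO_exp_neg (b := 1) one_pos
  · exact ((continuous_pow m).mul (Real.continuous_exp.comp (by continuity))).continuousOn
  · have h1 : (fun x : ℝ => x ^ m * Real.exp (-x)) =O[atTop] (fun _ : ℝ => (1:ℝ)) :=
      (Real.tendsto_pow_mul_exp_neg_atTop_nhds_zero m).isBigO_one ℝ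
    have h2 := h1.mul (Asymptotics.isBigO_refl (fun x : ℝ => Real.exp (-x)) atTop)
    refine h2.congr (fun x => ?_) (fun x => ?_)
    · rw [mul_assoc, ← Real.exp_add]; congr 2; ring
    · rw [one_mul]; congr 1; ring

lemma hd (x : ℝ) : HasDerivAt (fun x : ℝ => Real.exp (-(2 * x))) (Real.exp (-(2 * x)) * (-2)) x := by
  have h : HasDerivAt (fun x : ℝ => -(2 * x)) (-2) x := by
    have h0 : HasDerivAt (fun x : ℝ => 2 * x) 2 x := by simpa using (hasDerivAt_id x).const_mul (2:ℝ)
    exact h0.neg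
  exact h.exp

lemma intval (m : ℕ) (y : ℝ) :
    ∫ x in Ioi y, x ^ m * Real.exp (-(2 * x)) =
      Real.exp (-(2 * y)) * ∑ k ∈ range (m + 1),
        ((m.factorial : ℝ) / k.factorial) * y ^ k / 2 ^ (m + 1 - k) := by
  induction m generalizing y with
  | zero =>
      have h : ∫ x in Ioi y, x ^ 0 * Real.exp (-(2 * x)) =
          (0:ℝ) - (-Real.exp (-(2 * y)) / 2) := by
        apply integral_Ioi_of_hasDerivAt_of_tendsto'
          (f := fun x => -Real.exp (-(2 * x)) / 2)
        · intro x _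
          have h2 := (hd x).neg.div_const 2
          convert h2 using 1
          · rfl
          · rfl
          simp only [pow_zero, one_mul]; ring
        · simpa using intOn 0 y
        · have := (tends_zero 0).neg.div_const 2
          simp only [pow_zero, one_mul, neg_zero, zero_div] at this
          exact this
      rw [h]
      simp [Nat.factorial]
      ring
  | succ n ih =>
      have key : ∫ x in Ioi y,
          (x ^ (n+1) * Real.exp (-(2 * x)) - ((n:ℝ)+1)/2 * (x ^ n * Real.exp (-(2 * x)))) =
          (0:ℝ) - (-(y ^ (n+1) * Real.exp (-(2 * y))) / 2) := by
        apply integral_Ioi_of_hasDerivAt_of_tendsto'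
          (f := fun x => -(x ^ (n+1) * Real.exp (-(2 * x))) / 2)
        · intro x _
          have h1 := ((hasDerivAt_pow (n+1) x).mul (hd x)).neg.div_const 2
          convert h1 using 1
          · rfl
          · rfl
          simp only [Nat.add_sub_cancel]
          push_cast
          ring
        · exact (intOn (n+1) y).sub ((intOn n y).const_mul _)
        · have := (tends_zero (n+1)).neg.div_const 2
          simpa using this
      rw [integral_sub (intOn (n+1) y) ((intOn n y).const_mul _),
        MeasureTheory.integral_const_mul, ih] at key
      have h3 : ∫ x in Ioi y, x ^ (n+1) * Real.exp (-(2 * x)) =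
          y ^ (n+1) * Real.exp (-(2 * y)) / 2 +
          ((n:ℝ)+1)/2 * (Real.exp (-(2 * y)) * ∑ k ∈ range (n + 1),
            ((n.factorial : ℝ) / k.factorial) * y ^ k / 2 ^ (n + 1 - k)) := by
        linarith [key]
      rw [h3]
      have hsum : ∑ k ∈ range (n+1), (((n+1).factorial : ℝ) / k.factorial) * y ^ k / 2 ^ (n + 1 + 1 - k)
          = ((n:ℝ)+1)/2 * ∑ k ∈ range (n+1), ((n.factorial : ℝ) / k.factorial) * y ^ k / 2 ^ (n + 1 - k) := by
        rw [Finset.mul_sum]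
        refine Finset.sum_congr rfl fun k hk => ?_
        have hk' : k ≤ n := Nat.lt_succ_iff.mp (Finset.mem_range.mp hk)
        have e1 : n + 1 + 1 - k = (n + 1 - k) + 1 := by omega
        rw [e1, pow_succ, Nat.factorial_succ]
        push_cast
        ring
      rw [Finset.sum_range_succ (fun k => (((n+1).factorial : ℝ) / k.factorial) * y ^ k / 2 ^ (n + 1 + 1 - k)) (n+1), hsum]
      have e2 : n + 1 + 1 - (n + 1) = 1 := by omega
      have hf : (((n+1).factorial : ℝ)) ≠ 0 := Nat.cast_ne_zero.mpr (Nat.factorial_ne_zero _)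
      rw [e2, div_self hf]
      ring

lemma val0 (m : ℕ) : ∫ x in Ioi (0:ℝ), x ^ m * Real.exp (-(2 * x)) =
    (m.factorial : ℝ) / 2 ^ (m + 1) := by
  rw [intval, Finset.sum_range_succ']
  simp [zero_pow, Nat.factorial]

lemma algebra_id (n : ℕ) (z : ℝ) :
    Real.exp (-z) * (z ^ (n + 1) / (n + 1) + (n.factorial : ℝ) / 2 ^ (n + 1) +
        ∑ k ∈ range (n + 1), ((n.factorial : ℝ) / k.factorial) * z ^ k / 2 ^ (n + 1 - k)) =
      (Real.exp (-z) / (n + 1)) *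
        (z ^ (n + 1) +
          (∑ j ∈ Finset.range n,
            ((Nat.factorial (n + 1) : ℝ) / (Nat.factorial (n - j))) * z ^ (n - j) / 2 ^ (1 + j)) +
          (Nat.factorial (n + 1) : ℝ) / 2 ^ n) := by
  have hrefl : ∑ j ∈ Finset.range n,
      ((Nat.factorial (n + 1) : ℝ) / (Nat.factorial (n - j))) * z ^ (n - j) / 2 ^ (1 + j)
      = ∑ j ∈ Finset.range n,
      ((Nat.factorial (n + 1) : ℝ) / (Nat.factorial (j + 1))) * z ^ (j + 1) / 2 ^ (n - j) := by
    rw [← Finset.sum_range_reflect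
      (fun j => ((Nat.factorial (n + 1) : ℝ) / (Nat.factorial (j + 1))) * z ^ (j + 1) / 2 ^ (n - j)) n]
    refine Finset.sum_congr rfl fun j hj => ?_
    have hj' : j < n := Finset.mem_range.mp hj
    have e1 : n - 1 - j + 1 = n - j := by omega
    have e2 : n - (n - 1 - j) = j + 1 := by omega
    rw [e1, e2]
    congr 2
    omega
  rw [hrefl, Finset.sum_range_succ']
  simp only [Nat.add_sub_add_right, pow_zero, mul_one, Nat.sub_zero, Nat.factorial_zero,
    Nat.cast_one, div_one]
  have hsum2 : ∑ j ∈ Finset.range n,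
      ((Nat.factorial (n + 1) : ℝ) / (Nat.factorial (j + 1))) * z ^ (j + 1) / 2 ^ (n - j)
      = ((n:ℝ)+1) * ∑ j ∈ Finset.range n,
      ((Nat.factorial n : ℝ) / (Nat.factorial (j + 1))) * z ^ (j + 1) / 2 ^ (n - j) := by
    rw [Finset.mul_sum]
    refine Finset.sum_congr rfl fun j _ => ?_
    rw [Nat.factorial_succ n]
    push_cast
    ring
  rw [hsum2, Nat.factorial_succ n]
  have h1 : ((n:ℝ)+1) ≠ 0 := by positivity
  push_cast
  field_simp
  ring

lemma comp_neg_Iic {g : ℝ → ℝ} (hg : IntegrableOn g (Ici (0:ℝ))) :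
    IntegrableOn (fun x => g (-x)) (Iic (0:ℝ)) := by
  have hm : MeasurableEmbedding (fun x : ℝ => -x) := (Homeomorph.neg ℝ).measurableEmbedding
  rw [show (volume : Measure ℝ) = Measure.map (fun x : ℝ => -x) volume from
    (Measure.map_neg_eq_self _).symm, hm.integrableOn_map_iff]
  simpa [Function.comp_def, neg_preimage, neg_Iic, neg_zero] using hg

lemma main_nonneg (n : ℕ) (y : ℝ) (hy : 0 ≤ y) :
    ∫ x : ℝ, |x| ^ n * Real.exp (-|x|) * Real.exp (-|y - x|) =
      Real.exp (-y) * (y ^ (n + 1) / ((n : ℝ) + 1) + (n.factorial : ℝ) / 2 ^ (n + 1) +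
        ∑ k ∈ range (n + 1), ((n.factorial : ℝ) / k.factorial) * y ^ k / 2 ^ (n + 1 - k)) := by
  set f : ℝ → ℝ := fun x => |x| ^ n * Real.exp (-|x|) * Real.exp (-|y - x|) with hf
  -- region Iic 0
  have heq_a : EqOn (fun x : ℝ => (fun t : ℝ => Real.exp (-y) * (t ^ n * Real.exp (-(2 * t)))) (-x))
      f (Iic 0) := by
    intro x hx
    simp only [Set.mem_Iic] at hx
    have h1 : |x| = -x := abs_of_nonpos hx
    have h2 : |y - x| = y - x := abs_of_nonneg (by linarith)
    simp only [hf, h1, h2]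
    rw [mul_assoc ((-x) ^ n), ← Real.exp_add,
      show - -x + -(y - x) = -y + -(2 * -x) by ring, Real.exp_add]
    ring
  have hint_a : IntegrableOn f (Iic 0) := by
    exact (comp_neg_Iic (g := fun t : ℝ => Real.exp (-y) * (t ^ n * Real.exp (-(2 * t))))
      (((integrableOn_Ici_iff_integrableOn_Ioi (f := fun x : ℝ => x ^ n * Real.exp (-(2 * x))) (b := 0) (hb := enorm_ne_top)).mpr (intOn n 0)).const_mul _)).congr_fun
      heq_a measurableSet_Iic
  have hval_a : ∫ x in Iic 0, f x = Real.exp (-y) * ((n.factorial : ℝ) / 2 ^ (n + 1)) := by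
    rw [← setIntegral_congr_fun measurableSet_Iic heq_a,
      integral_comp_neg_Iic 0 (fun t : ℝ => Real.exp (-y) * (t ^ n * Real.exp (-(2 * t)))),
      neg_zero, MeasureTheory.integral_const_mul, val0]
  -- region Ioc 0 y
  have hcont : Continuous f := by
    apply Continuous.mul
    apply Continuous.mul
    · exact (continuous_abs.pow n)
    · exact Real.continuous_exp.comp continuous_abs.neg
    · exact Real.continuous_exp.comp ((continuous_const.sub continuous_id).abs.neg)
  have hint_b : IntegrableOn f (Ioc 0 y) := hcont.integrableOn_Ioc
  have heq_b : EqOn f (fun x : ℝ => Real.exp (-y) * x ^ n) (Ioc 0 y) := by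
    intro x hx
    obtain ⟨hx1, hx2⟩ := hx
    have h1 : |x| = x := abs_of_nonneg hx1.le
    have h2 : |y - x| = y - x := abs_of_nonneg (by linarith)
    simp only [hf, h1, h2]
    rw [mul_assoc, ← Real.exp_add]
    rw [show -x + -(y - x) = -y by ring]
    ring
  have hval_b : ∫ x in Ioc 0 y, f x = Real.exp (-y) * (y ^ (n + 1) / ((n : ℝ) + 1)) := by
    rw [setIntegral_congr_fun measurableSet_Ioc heq_b,
      ← intervalIntegral.integral_of_le hy, intervalIntegral.integral_const_mul,
      integral_pow]
    have : n + 1 ≠ 0 := Nat.succ_ne_zero n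
    rw [zero_pow this]
    push_cast
    ring
  -- region Ioi y
  have heq_c : EqOn f (fun x : ℝ => Real.exp y * (x ^ n * Real.exp (-(2 * x)))) (Ioi y) := by
    intro x hx
    simp only [Set.mem_Ioi] at hx
    have h1 : |x| = x := abs_of_nonneg (by linarith)
    have h2 : |y - x| = -(y - x) := abs_of_nonpos (by linarith)
    simp only [hf, h1, h2]
    rw [mul_assoc, ← Real.exp_add]
    rw [show -x + - -(y - x) = y + -(2 * x) by ring, Real.exp_add]
    ring
  have hint_c : IntegrableOn f (Ioi y) :=
    IntegrableOn.congr_fun ((intOn n y).const_mul (Real.exp y))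
      (fun x hx => (heq_c hx).symm) measurableSet_Ioi
  have hval_c : ∫ x in Ioi y, f x = Real.exp (-y) *
      ∑ k ∈ range (n + 1), ((n.factorial : ℝ) / k.factorial) * y ^ k / 2 ^ (n + 1 - k) := by
    rw [setIntegral_congr_fun measurableSet_Ioi heq_c, MeasureTheory.integral_const_mul, intval,
      ← mul_assoc, ← Real.exp_add]
    congr 2
    ring
  -- assemble
  have hsplit2 : ∫ x in Ioi 0, f x = (∫ x in Ioc 0 y, f x) + ∫ x in Ioi y, f x := by
    rw [← Ioc_union_Ioi_eq_Ioi hy,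
      setIntegral_union (Ioc_disjoint_Ioi le_rfl) measurableSet_Ioi hint_b hint_c]
  have hint_r : IntegrableOn f (Ioi 0) := by
    rw [← Ioc_union_Ioi_eq_Ioi hy]
    exact hint_b.union hint_c
  rw [← intervalIntegral.integral_Iic_add_Ioi hint_a hint_r, hsplit2, hval_a, hval_b, hval_c]
  ring

end Stmt4Aux

open Stmt4Aux in
theorem stmt_4 (ℓ : ℕ) (y : ℝ) :
    ∫ x : ℝ, |x| ^ ℓ * Real.exp (-|x|) * Real.exp (-|y - x|) =
      (Real.exp (-|y|) / (ℓ + 1)) *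
        (|y| ^ (ℓ + 1) +
          (∑ j ∈ Finset.range ℓ,
            ((Nat.factorial (ℓ + 1) : ℝ) / (Nat.factorial (ℓ - j))) * |y| ^ (ℓ - j) / 2 ^ (1 + j)) +
          (Nat.factorial (ℓ + 1) : ℝ) / 2 ^ ℓ) := by
  rcases le_total 0 y with hy | hy
  · rw [abs_of_nonneg hy, main_nonneg ℓ y hy]
    exact algebra_id ℓ y
  · have h1 : (∫ x : ℝ, |x| ^ ℓ * Real.exp (-|x|) * Real.exp (-|(-y) - x|)) =
        ∫ x : ℝ, |x| ^ ℓ * Real.exp (-|x|) * Real.exp (-|y - x|) := by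
      rw [← (Measure.measurePreserving_neg (volume : Measure ℝ)).integral_comp
        (Homeomorph.neg ℝ).measurableEmbedding
        (fun x => |x| ^ ℓ * Real.exp (-|x|) * Real.exp (-|y - x|))]
      refine integral_congr_ae (Filter.Eventually.of_forall fun x => ?_)
      simp only [abs_neg]
      rw [show y - -x = -(-y - x) by ring, abs_neg]
    rw [abs_of_nonpos hy, ← h1, main_nonneg ℓ (-y) (neg_nonneg.mpr hy)]
    exact algebra_id ℓ (-y)
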